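/- For 2 ≤ i < j ≤ n, every element of P_n^i normalizes P_n^j from the appropriate side: for all μ ∈ P_n^i and ν ∈ P_n^j one has μ⁻¹ ν μ ∈ P_n^j (equivalently, there exists ν̃ ∈ P_n^j with ν μ = μ ν̃). -/

import Mathlib

/-! Basic setup: the braid group `B_n` as a presented group.  Generators are
indexed by `ℕ`; the generator with index `i` represents `σ_i` for
`1 ≤ i ≤ n-1`, and all generators with index `0` or `≥ n` are trivialized. -/

/-- The relators of the braid group `B_n`. -/
def braidRels (n : ℕ) : Set (FreeGroup ℕ) :=
  { r | (∃ i, 1 ≤ i ∧ i + 2 ≤ n ∧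
          r = .of i * .of (i+1) * .of i * (.of (i+1) * .of i * .of (i+1))⁻¹) ∨
        (∃ i j, 1 ≤ i ∧ i + 2 ≤ j ∧ j + 1 ≤ n ∧
          r = .of i * .of j * (.of j * .of i)⁻¹) ∨
        (∃ i, (i = 0 ∨ n ≤ i) ∧ r = .of i) }

/-- The braid group on `n` strings. -/
abbrev BraidGroup (n : ℕ) := PresentedGroup (braidRels n)

/-- The standard generator `σ_i` of `B_n` (nontrivial for `1 ≤ i ≤ n-1`). -/
def σ (n i : ℕ) : BraidGroup n := PresentedGroup.of i

/-- The transposition `(i, i+1)` of the strings `{1, …, n}`, as a permutation of `ℕ`. -/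
def permOfGen (n i : ℕ) : Equiv.Perm ℕ :=
  if 1 ≤ i ∧ i + 1 ≤ n then Equiv.swap i (i+1) else 1

theorem braidRels_lift (n : ℕ) :
    ∀ r ∈ braidRels n, FreeGroup.lift (permOfGen n) r = 1 := by
  rintro r (⟨i, h1, h2, rfl⟩ | ⟨i, j, h1, h2, h3, rfl⟩ | ⟨i, hi, rfl⟩)
  · have e1 : permOfGen n i = Equiv.swap i (i+1) := if_pos ⟨h1, by omega⟩
    have e2 : permOfGen n (i+1) = Equiv.swap (i+1) (i+2) := if_pos ⟨by omega, by omega⟩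
    simp only [map_mul, map_inv, FreeGroup.lift_apply_of, e1, e2]
    rw [mul_inv_eq_one]
    have l : Equiv.swap i (i+1) * Equiv.swap (i+1) (i+2) * Equiv.swap i (i+1)
        = Equiv.swap i (i+2) := by
      have h := Equiv.swap_mul_swap_mul_swap
        (x := i+2) (y := i+1) (z := i) (by omega) (by omega)
      rwa [Equiv.swap_comm (i+1) i, Equiv.swap_comm (i+2) (i+1)] at h
    have r : Equiv.swap (i+1) (i+2) * Equiv.swap i (i+1) * Equiv.swap (i+1) (i+2)
        = Equiv.swap i (i+2) := by
      have h := Equiv.swap_mul_swap_mul_swap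
        (x := i) (y := i+1) (z := i+2) (by omega) (by omega)
      rwa [Equiv.swap_comm (i+2) i] at h
    rw [l, r]
  · have e1 : permOfGen n i = Equiv.swap i (i+1) := if_pos ⟨h1, by omega⟩
    have e2 : permOfGen n j = Equiv.swap j (j+1) := if_pos ⟨by omega, by omega⟩
    simp only [map_mul, map_inv, FreeGroup.lift_apply_of, e1, e2]
    rw [mul_inv_eq_one]
    have hd : (Equiv.swap i (i+1)).Disjoint (Equiv.swap j (j+1)) := by
      intro x
      rcases eq_or_ne x i with rfl | hxi
      · right; exact Equiv.swap_apply_of_ne_of_ne (by omega) (by omega)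
      rcases eq_or_ne x (i+1) with rfl | hxi1
      · right; exact Equiv.swap_apply_of_ne_of_ne (by omega) (by omega)
      · left; exact Equiv.swap_apply_of_ne_of_ne hxi hxi1
    exact hd.commute
  · have h : permOfGen n i = 1 := if_neg (by omega)
    simp [h]

/-- The canonical projection `Π : B_n → S_n`, sending `σ_i` to the
transposition `(i, i+1)` (strings are `1, …, n`, permutations of `ℕ`
fixing everything else). -/
def braidPerm (n : ℕ) : BraidGroup n →* Equiv.Perm ℕ :=
  PresentedGroup.toGroup (braidRels_lift n)

theorem braidPerm_σ (n i : ℕ) : braidPerm n (σ n i) = permOfGen n i :=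
  PresentedGroup.toGroup.of (braidRels_lift n)

/-- The pure braid group `P_n = ker Π`. -/
def PureBraid (n : ℕ) : Subgroup (BraidGroup n) := (braidPerm n).ker

/-- The standard pure braid generator
`A_{ij} = σ_{j-1} ⋯ σ_{i+1} σ_i² σ_{i+1}⁻¹ ⋯ σ_{j-1}⁻¹`. -/
def A (n i : ℕ) : ℕ → BraidGroup n
  | 0 => 1
  | j+1 => if j ≤ i then σ n i ^ 2 else σ n j * A n i j * (σ n j)⁻¹

/-- The group `P_n^j` of pure `j`-braids, generated by `A_{ij}` for `1 ≤ i < j`. -/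
def P (n j : ℕ) : Subgroup (BraidGroup n) :=
  Subgroup.closure ((fun i => A n i j) '' Set.Ico 1 j)

/-- Partial sums `N_1 = n_1, N_2 = n_1+n_2, …, N_k = n_1+⋯+n_k` of a list. -/
def partialSums : List ℕ → List ℕ
  | [] => []
  | a :: l => a :: (partialSums l).map (a + ·)

/-- The permutation braid `π_{n₁…n_k}`: the product `σ_1 σ_2 ⋯ σ_{n-1}` with the
letters `σ_{N_1}, …, σ_{N_{k-1}}` omitted. -/
def piBraid (n : ℕ) (ns : List ℕ) : BraidGroup n :=
  (((List.range n).filter fun i => decide (1 ≤ i ∧ i ∉ partialSums ns)).map (σ n)).prod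

/-- The permutation braid `π_n = σ_1 σ_2 ⋯ σ_{n-1}`. -/
def piN (n : ℕ) : BraidGroup n := piBraid n [n]

/-- A braid is woven of type `(n₁, …, n_k)` if it can be written as
`π_{n₁…n_k} β_{N_1} β_{N_2} ⋯ β_{N_k}` with each `β_{N_i} ∈ P_n^{N_i}`. -/
def IsWovenOfType (n : ℕ) (ns : List ℕ) (w : BraidGroup n) : Prop :=
  ∃ b : ℕ → BraidGroup n,
    (∀ m ∈ partialSums ns, b m ∈ P n m) ∧
    w = piBraid n ns * ((partialSums ns).map b).prod

/-- `W_n^1 = π_n P_n^n`, the set of woven braids of type `(n)`. -/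
def W1 (n : ℕ) : Set (BraidGroup n) := { w | ∃ b ∈ P n n, w = piN n * b }
section Helpers
variable {G : Type*} [Group G]

lemma rel_one {n : ℕ} {r : FreeGroup ℕ} (hr : r ∈ braidRels n) :
    PresentedGroup.mk (braidRels n) r = 1 := by
  rw [PresentedGroup.mk]
  exact (QuotientGroup.eq_one_iff _).2 (Subgroup.subset_normalClosure hr)

lemma braid_rel (n i : ℕ) (h1 : 1 ≤ i) (h2 : i + 2 ≤ n) :
    σ n i * σ n (i+1) * σ n i = σ n (i+1) * σ n i * σ n (i+1) := by
  have hr : (FreeGroup.of i * .of (i+1) * .of i * (.of (i+1) * .of i * .of (i+1))⁻¹)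
      ∈ braidRels n := Or.inl ⟨i, h1, h2, rfl⟩
  have h := rel_one hr
  simp only [map_mul, map_inv, mul_inv_eq_one] at h
  exact h

lemma comm_σ (n s t : ℕ) (hs : 1 ≤ s) (hst : s + 2 ≤ t) (htn : t + 1 ≤ n) :
    Commute (σ n s) (σ n t) := by
  have hr : (FreeGroup.of s * .of t * (.of t * .of s)⁻¹)
      ∈ braidRels n := Or.inr (Or.inl ⟨s, t, hs, hst, htn, rfl⟩)
  have h := rel_one hr
  simp only [map_mul, map_inv, mul_inv_eq_one] at h
  exact h

lemma conj_conj {a b x y : G} (hab : a * b = b * a) (h : a * x * a⁻¹ = y) :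
    a * (b * x * b⁻¹) * a⁻¹ = b * y * b⁻¹ := by
  subst h
  rw [show a * (b * x * b⁻¹) * a⁻¹ = (a * b) * x * (a * b)⁻¹ by group, hab]
  group

lemma conj_inv_of_conj {a x y : G} (h : a * x * a⁻¹ = y) : a⁻¹ * y * a = x := by
  rw [← h]; group

lemma braid_I1 {a b : G} (h : a * b * a = b * a * b) :
    a * (b * (a * a) * b⁻¹) * a⁻¹ = b * b := by
  have e1 : a * (b * (a * a) * b⁻¹) * a⁻¹ = (a * b * a) * (a * b⁻¹ * a⁻¹) := by group
  rw [e1, h]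
  have e2 : (b * a * b) * (a * b⁻¹ * a⁻¹) = b * (a * b * a) * (b⁻¹ * a⁻¹) := by group
  rw [e2, h]
  group

lemma braid_I2 {a b : G} (h : a * b * a = b * a * b) :
    a * (b * b) * a⁻¹ = (b * b)⁻¹ * (b * (a * a) * b⁻¹) * (b * b) := by
  have hc : a * b * a⁻¹ = b⁻¹ * a * b := by
    have h1 : b * (a * b * a⁻¹) = a * b := by
      rw [show b * (a * b * a⁻¹) = (b * a * b) * a⁻¹ by group, ← h]; group
    calc a * b * a⁻¹ = b⁻¹ * (b * (a * b * a⁻¹)) := by group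
    _ = b⁻¹ * (a * b) := by rw [h1]
    _ = b⁻¹ * a * b := by group
  calc a * (b * b) * a⁻¹ = (a * b * a⁻¹) * (a * b * a⁻¹) := by group
  _ = (b⁻¹ * a * b) * (b⁻¹ * a * b) := by rw [hc]
  _ = (b * b)⁻¹ * (b * (a * a) * b⁻¹) * (b * b) := by group

end Helpers

lemma commA (n t k j : ℕ) (hk : 1 ≤ k) (hkj : k < j) (hjn : j ≤ n)
    (ht : j + 1 ≤ t ∨ t + 2 ≤ k) (ht1 : 1 ≤ t) (htn : t + 1 ≤ n) :
    Commute (σ n t) (A n k j) := by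
  induction j with
  | zero => omega
  | succ j ih =>
    rw [A]
    split_ifs with hjk
    · have hck : Commute (σ n t) (σ n k) := by
        rcases ht with h | h
        · exact (comm_σ n k t hk (by omega) htn).symm
        · exact comm_σ n t k ht1 h (by omega)
      exact hck.pow_right 2
    · have h1 : Commute (σ n t) (σ n j) := by
        rcases ht with h | h
        · exact (comm_σ n j t (by omega) (by omega) htn).symm
        · exact comm_σ n t j ht1 (by omega) (by omega)
      have h2 : Commute (σ n t) (A n k j) := by
        apply ih (by omega) (by omega)
        rcases ht with h | h
        · exact Or.inl (by omega)
        · exact Or.inr h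
      exact (h1.mul_right h2).mul_right h1.inv_right

lemma conj_fix_low (n m k j : ℕ) (hm : 1 ≤ m) (hmk : m + 2 ≤ k) (hkj : k < j) (hjn : j ≤ n) :
    σ n m * A n k j * (σ n m)⁻¹ = A n k j := by
  have h := (commA n m k j (by omega) hkj hjn (Or.inr hmk) hm (by omega)).eq
  rw [h, mul_inv_cancel_right]

lemma conj_fix_high (n m k j : ℕ) (hk : 1 ≤ k) (hkm : k < m) (hmj : m + 2 ≤ j) (hjn : j ≤ n) :
    σ n m * A n k j * (σ n m)⁻¹ = A n k j := by
  induction j with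
  | zero => omega
  | succ j ih =>
    by_cases hm2 : m + 2 ≤ j
    · rw [A, if_neg (by omega)]
      exact conj_conj (comm_σ n m j (by omega) (by omega) (by omega)).eq (ih hm2 (by omega))
    · have hj : j = m + 1 := by omega
      subst hj
      rw [A, if_neg (by omega), A, if_neg (by omega)]
      have hm : 1 ≤ m := by omega
      set a := σ n m with ha
      set b := σ n (m+1) with hb
      set X := A n k m with hX
      have hbr : a * b * a = b * a * b := braid_rel n m hm (by omega)
      have hcX : Commute b X :=
        commA n (m+1) k m hk hkm (by omega) (Or.inl (by omega)) (by omega) (by omega)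
      calc a * (b * (a * X * a⁻¹) * b⁻¹) * a⁻¹
          = (a * b * a) * X * (a * b * a)⁻¹ := by group
        _ = (b * a * b) * X * (b * a * b)⁻¹ := by rw [hbr]
        _ = b * a * (b * X * b⁻¹) * a⁻¹ * b⁻¹ := by group
        _ = b * a * X * a⁻¹ * b⁻¹ := by rw [hcX.eq, mul_inv_cancel_right]
        _ = b * (a * X * a⁻¹) * b⁻¹ := by group

lemma conj_up (n k j : ℕ) (hk : 1 ≤ k) (hkj : k + 2 ≤ j) (hjn : j ≤ n) :
    σ n k * A n k j * (σ n k)⁻¹ = A n (k+1) j := by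
  induction j with
  | zero => omega
  | succ j ih =>
    by_cases h : k + 2 ≤ j
    · rw [show A n k (j+1) = σ n j * A n k j * (σ n j)⁻¹ from by rw [A, if_neg (by omega)],
        show A n (k+1) (j+1) = σ n j * A n (k+1) j * (σ n j)⁻¹ from by rw [A, if_neg (by omega)]]
      exact conj_conj (comm_σ n k j hk (by omega) (by omega)).eq (ih h (by omega))
    · have hj : j = k + 1 := by omega
      subst hj
      rw [show A n k (k+1+1) = σ n (k+1) * (σ n k * σ n k) * (σ n (k+1))⁻¹ from by
          rw [A, if_neg (by omega), A, if_pos (le_refl k), pow_two],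
        show A n (k+1) (k+1+1) = σ n (k+1) * σ n (k+1) from by
          rw [A, if_pos (le_refl (k+1)), pow_two]]
      exact braid_I1 (braid_rel n k hk (by omega))

lemma conj_down (n k j : ℕ) (hk : 1 ≤ k) (hkj : k + 2 ≤ j) (hjn : j ≤ n) :
    σ n k * A n (k+1) j * (σ n k)⁻¹ = (A n (k+1) j)⁻¹ * A n k j * A n (k+1) j := by
  induction j with
  | zero => omega
  | succ j ih =>
    by_cases h : k + 2 ≤ j
    · rw [show A n (k+1) (j+1) = σ n j * A n (k+1) j * (σ n j)⁻¹ from by rw [A, if_neg (by omega)],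
        show A n k (j+1) = σ n j * A n k j * (σ n j)⁻¹ from by rw [A, if_neg (by omega)]]
      have e := conj_conj (comm_σ n k j hk (by omega) (by omega)).eq (ih h (by omega))
      rw [e]
      group
    · have hj : j = k + 1 := by omega
      subst hj
      rw [show A n (k+1) (k+1+1) = σ n (k+1) * σ n (k+1) from by
          rw [A, if_pos (le_refl (k+1)), pow_two],
        show A n k (k+1+1) = σ n (k+1) * (σ n k * σ n k) * (σ n (k+1))⁻¹ from by
          rw [A, if_neg (by omega), A, if_pos (le_refl k), pow_two]]
      exact braid_I2 (braid_rel n k hk (by omega))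

lemma conj_mem_closure {G : Type*} [Group G] (S : Set G) (g x : G)
    (h : ∀ s ∈ S, g * s * g⁻¹ ∈ Subgroup.closure S) (hx : x ∈ Subgroup.closure S) :
    g * x * g⁻¹ ∈ Subgroup.closure S := by
  induction hx using Subgroup.closure_induction with
  | mem s hs => exact h s hs
  | one => simpa using one_mem _
  | mul x y hx hy ihx ihy =>
    have : g * (x * y) * g⁻¹ = (g * x * g⁻¹) * (g * y * g⁻¹) := by group
    rw [this]; exact mul_mem ihx ihy
  | inv x hx ihx =>
    have : g * x⁻¹ * g⁻¹ = (g * x * g⁻¹)⁻¹ := by group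
    rw [this]; exact inv_mem ihx

lemma A_mem_P (n j k : ℕ) (hk : 1 ≤ k) (hkj : k < j) : A n k j ∈ P n j :=
  Subgroup.subset_closure ⟨k, ⟨hk, hkj⟩, rfl⟩

lemma σ_mem_normalizer (n m j : ℕ) (hm : 1 ≤ m) (hmj : m + 2 ≤ j) (hjn : j ≤ n) :
    σ n m ∈ Subgroup.normalizer (P n j : Set (BraidGroup n)) := by
  have hfwd : ∀ k, 1 ≤ k → k < j → σ n m * A n k j * (σ n m)⁻¹ ∈ P n j := by
    intro k hk hkj
    rcases lt_trichotomy m k with h | rfl | h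
    · rcases eq_or_lt_of_le (Nat.succ_le_of_lt h) with h1 | h1
      · -- m + 1 = k
        rw [← h1, conj_down n m j hm hmj hjn]
        exact mul_mem (mul_mem (inv_mem (A_mem_P n j (m+1) (by omega) (by omega)))
          (A_mem_P n j m hm (by omega))) (A_mem_P n j (m+1) (by omega) (by omega))
      · rw [conj_fix_low n m k j hm (by omega) hkj hjn]
        exact A_mem_P n j k hk hkj
    · rw [conj_up n m j hm hmj hjn]
      exact A_mem_P n j (m+1) (by omega) (by omega)
    · rw [conj_fix_high n m k j hk h (by omega) hjn]
      exact A_mem_P n j k hk hkj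
  have hbwd : ∀ k, 1 ≤ k → k < j → (σ n m)⁻¹ * A n k j * σ n m ∈ P n j := by
    intro k hk hkj
    rcases lt_trichotomy m k with h | rfl | h
    · rcases eq_or_lt_of_le (Nat.succ_le_of_lt h) with h1 | h1
      · -- m + 1 = k : σ_m⁻¹ A_{m+1,j} σ_m = A_{m,j}
        rw [← h1, conj_inv_of_conj (conj_up n m j hm hmj hjn)]
        exact A_mem_P n j m hm (by omega)
      · rw [conj_inv_of_conj (conj_fix_low n m k j hm (by omega) hkj hjn)]
        exact A_mem_P n j k hk hkj
    · -- m = k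
      have hd := conj_down n m j hm hmj hjn
      have hu := conj_inv_of_conj (conj_up n m j hm hmj hjn)
      have hx : A n m j = A n (m+1) j * (σ n m * A n (m+1) j * (σ n m)⁻¹) * (A n (m+1) j)⁻¹ := by
        rw [hd]; group
      rw [show (σ n m)⁻¹ * A n m j * σ n m
          = ((σ n m)⁻¹ * A n (m+1) j * σ n m) * A n (m+1) j * ((σ n m)⁻¹ * A n (m+1) j * σ n m)⁻¹
          from by nth_rewrite 1 [hx]; group, hu]
      exact mul_mem (mul_mem (A_mem_P n j m hm (by omega)) (A_mem_P n j (m+1) (by omega) (by omega)))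
        (inv_mem (A_mem_P n j m hm (by omega)))
    · rw [conj_inv_of_conj (conj_fix_high n m k j hk h (by omega) hjn)]
      exact A_mem_P n j k hk hkj
  rw [Subgroup.mem_normalizer_iff]
  intro x
  constructor
  · intro hx
    refine conj_mem_closure _ _ _ ?_ hx
    rintro s ⟨k, ⟨hk1, hk2⟩, rfl⟩
    exact hfwd k hk1 hk2
  · intro hx
    have := conj_mem_closure ((fun i => A n i j) '' Set.Ico 1 j) (σ n m)⁻¹ _ ?_ hx
    · rwa [show (σ n m)⁻¹ * (σ n m * x * (σ n m)⁻¹) * (σ n m)⁻¹⁻¹ = x by group] at this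
    · rintro s ⟨k, ⟨hk1, hk2⟩, rfl⟩
      rw [inv_inv]
      exact hbwd k hk1 hk2

lemma A_mem_σclosure (n t : ℕ) : ∀ j k, 1 ≤ k → k < j → j ≤ t + 1 →
    A n k j ∈ Subgroup.closure (σ n '' Set.Icc 1 t) := by
  intro j
  induction j with
  | zero => omega
  | succ j ih =>
    intro k hk hkj hjt
    rw [A]
    split_ifs with h
    · exact pow_mem (Subgroup.subset_closure
        (Set.mem_image_of_mem _ (Set.mem_Icc.mpr ⟨hk, by omega⟩))) 2
    · exact mul_mem (mul_mem (Subgroup.subset_closure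
          (Set.mem_image_of_mem _ (Set.mem_Icc.mpr ⟨by omega, by omega⟩)))
        (ih k hk (by omega) (by omega)))
        (inv_mem (Subgroup.subset_closure
          (Set.mem_image_of_mem _ (Set.mem_Icc.mpr ⟨by omega, by omega⟩))))


/-- For `2 ≤ i < j ≤ n`, every element of `P_n^i` normalizes
`P_n^j` from the appropriate side: `μ⁻¹ ν μ ∈ P_n^j` for all `μ ∈ P_n^i` and
`ν ∈ P_n^j`. -/
theorem pure_i_normalizes_pure_j (n : ℕ) (hn : 2 ≤ n) (i j : ℕ)
    (h2 : 2 ≤ i) (hij : i < j) (hj : j ≤ n)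
    (μ ν : BraidGroup n) (hμ : μ ∈ P n i) (hν : ν ∈ P n j) :
    μ⁻¹ * ν * μ ∈ P n j := by
  have hμT : μ ∈ Subgroup.closure (σ n '' Set.Icc 1 (j - 2)) := by
    refine (Subgroup.closure_le _).2 ?_ hμ
    rintro _ ⟨k, ⟨hk1, hk2⟩, rfl⟩
    exact A_mem_σclosure n (j-2) i k hk1 hk2 (by omega)
  have hμN : μ ∈ Subgroup.normalizer (P n j : Set (BraidGroup n)) := by
    refine (Subgroup.closure_le _).2 ?_ hμT
    rintro _ ⟨m, ⟨hm1, hm2⟩, rfl⟩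
    exact σ_mem_normalizer n m j hm1 (by omega) hj
  have h := (Subgroup.mem_normalizer_iff.mp (inv_mem hμN) ν).mp hν
  rwa [inv_inv] at h
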